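/- Let m, ℓ ∈ ℕ, let d : ({-1,0,1}^m) → ℝ, and define f(θ) = Σ_ω d_ω Φ_ω(θ) (sum over all frequency vectors ω ∈ {-1,0,1}^m) and its truncation g(θ) = Σ_{|ω| ≤ ℓ} d_ω Φ_ω(θ). Then Δ(f,g)² = Σ_{|ω| > ℓ} 2^{-|ω|} d_ω². -/

import Mathlib

open MeasureTheory Finset

/-- The trigonometric monomial factor: `φ₀ = 1`, `φ₁ = cos`, `φ₋₁ = sin`. -/
noncomputable def phi (w : ℤ) (x : ℝ) : ℝ :=
  if w = 1 then Real.cos x else if w = -1 then Real.sin x else 1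

/-- The multivariate trigonometric monomial `Φ_ω(θ) = ∏ i, φ_{ω i}(θ i)`. -/
noncomputable def Phi {m : ℕ} (ω : Fin m → ℤ) (θ : Fin m → ℝ) : ℝ :=
  ∏ i, phi (ω i) (θ i)

/-- The weight `|ω|` of a frequency vector: the number of nonzero entries. -/
def wt {m : ℕ} (ω : Fin m → ℤ) : ℕ := (Finset.univ.filter fun i => ω i ≠ 0).card

/-- The finite set of all frequency vectors `ω ∈ {-1,0,1}^m`. -/
def freqSet (m : ℕ) : Finset (Fin m → ℤ) :=
  Fintype.piFinset fun _ => ({-1, 0, 1} : Finset ℤ)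

/-- The mean of a function over the cube `[0, 2π]^m`. -/
noncomputable def cubeMean (m : ℕ) (h : (Fin m → ℝ) → ℝ) : ℝ :=
  ((2 * Real.pi) ^ m)⁻¹ *
    ∫ θ in Set.Icc (0 : Fin m → ℝ) (fun _ => 2 * Real.pi), h θ

/-- The average `L²` distance `Δ(f,g)` over the parameter cube `[0, 2π]^m`. -/
noncomputable def Delta (m : ℕ) (f g : (Fin m → ℝ) → ℝ) : ℝ :=
  Real.sqrt (cubeMean m fun θ => (f θ - g θ) ^ 2)

open Real in
lemma phi_continuous (w : ℤ) : Continuous (phi w) := by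
  unfold phi; split_ifs <;> continuity

lemma Phi_continuous {m : ℕ} (ω : Fin m → ℤ) : Continuous (Phi ω) :=
  continuous_finset_prod _ fun i _ => (phi_continuous (ω i)).comp (continuous_apply i)

open Real in
lemma Jval (w w' : ℤ) (hw : w ∈ ({-1,0,1}:Finset ℤ)) (hw' : w' ∈ ({-1,0,1}:Finset ℤ)) :
    (2*π)⁻¹ * ∫ x in Set.Icc (0:ℝ) (2*π), phi w x * phi w' x
      = if w = w' then (if w = 0 then 1 else 2⁻¹) else 0 := by
  have h2 : (0:ℝ) ≤ 2*π := by positivity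
  have key : ∫ x in Set.Icc (0:ℝ) (2*π), phi w x * phi w' x
      = ∫ x in (0:ℝ)..(2*π), phi w x * phi w' x := by
    rw [intervalIntegral.integral_of_le h2, MeasureTheory.integral_Icc_eq_integral_Ioc]
  rw [key]
  have hπ : (π:ℝ) ≠ 0 := Real.pi_ne_zero
  have hc : ∫ x in (0:ℝ)..(2*π), Real.cos x = 0 := by
    simp [integral_cos, Real.sin_two_pi]
  have hs : ∫ x in (0:ℝ)..(2*π), Real.sin x = 0 := by
    simp [integral_sin, Real.cos_two_pi]
  have hcc : ∫ x in (0:ℝ)..(2*π), Real.cos x * Real.cos x = π := by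
    have := integral_cos_sq (a := 0) (b := 2*π)
    simp only [sq] at this
    rw [this, Real.sin_two_pi, Real.cos_two_pi, Real.sin_zero, Real.cos_zero]; ring
  have hss : ∫ x in (0:ℝ)..(2*π), Real.sin x * Real.sin x = π := by
    have := integral_sin_sq (a := 0) (b := 2*π)
    simp only [sq] at this
    rw [this, Real.sin_two_pi, Real.cos_two_pi, Real.sin_zero, Real.cos_zero]; ring
  have hsc : ∫ x in (0:ℝ)..(2*π), Real.sin x * Real.cos x = 0 := by
    simp [integral_sin_mul_cos₁, Real.sin_two_pi]
  have hcs : ∫ x in (0:ℝ)..(2*π), Real.cos x * Real.sin x = 0 := by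
    rw [show (fun x => Real.cos x * Real.sin x) = fun x => Real.sin x * Real.cos x from
      funext fun x => mul_comm _ _]
    exact hsc
  have h1 : ∫ x in (0:ℝ)..(2*π), (1:ℝ) = 2*π := by simp
  have hinv : (2*π)⁻¹ * π = 2⁻¹ := by field_simp
  fin_cases hw <;> fin_cases hw' <;>
    simp only [phi, if_true, if_false, reduceIte, mul_one, one_mul] <;>
    simp [hc, hs, hcc, hss, hsc, hcs, h1, hinv, hπ] <;> field_simp <;> ring

open Real in
lemma cube_integral_prod (m : ℕ) (F : Fin m → ℝ → ℝ) :
    ∫ θ in Set.Icc (0 : Fin m → ℝ) (fun _ => 2*π), ∏ i, F i (θ i)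
      = ∏ i, ∫ x in Set.Icc (0:ℝ) (2*π), F i x := by
  rw [← MeasureTheory.integral_indicator measurableSet_Icc]
  have heq : (Set.Icc (0 : Fin m → ℝ) fun _ => 2*π).indicator (fun θ => ∏ i, F i (θ i))
      = fun θ => ∏ i, (Set.Icc (0:ℝ) (2*π)).indicator (F i) (θ i) := by
    funext θ
    rw [← Set.pi_univ_Icc]
    simp only [Pi.zero_apply]
    by_cases h : θ ∈ Set.pi Set.univ (fun _ : Fin m => Set.Icc (0:ℝ) (2*π))
    · rw [Set.indicator_of_mem h]
      exact Finset.prod_congr rfl fun i _ => (Set.indicator_of_mem (h i trivial) _).symm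
    · rw [Set.indicator_of_notMem h]
      rw [Set.mem_univ_pi, not_forall] at h
      obtain ⟨i, hi⟩ := h
      exact (Finset.prod_eq_zero (Finset.mem_univ i)
        (Set.indicator_of_notMem hi _)).symm
  rw [heq, MeasureTheory.integral_fintype_prod_volume_eq_prod (𝕜 := ℝ)
    (f := fun i x => (Set.Icc (0:ℝ) (2*π)).indicator (F i) x)]
  exact Finset.prod_congr rfl fun i _ =>
    (MeasureTheory.integral_indicator measurableSet_Icc)

open Real in
lemma cubeMean_Phi_mul {m : ℕ} {ω ω' : Fin m → ℤ} (hω : ω ∈ freqSet m)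
    (hω' : ω' ∈ freqSet m) :
    cubeMean m (fun θ => Phi ω θ * Phi ω' θ)
      = if ω = ω' then ((2:ℝ) ^ wt ω)⁻¹ else 0 := by
  have h1 : (fun θ : Fin m → ℝ => Phi ω θ * Phi ω' θ)
      = fun θ => ∏ i, (phi (ω i) (θ i) * phi (ω' i) (θ i)) := by
    funext θ; rw [Phi, Phi, ← Finset.prod_mul_distrib]
  rw [cubeMean, h1, cube_integral_prod m (fun i x => phi (ω i) x * phi (ω' i) x)]
  have h2 : ((2 * π) ^ m)⁻¹ = ∏ _i : Fin m, (2*π)⁻¹ := by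
    rw [Finset.prod_const, Finset.card_univ, Fintype.card_fin, ← inv_pow]
  rw [h2, ← Finset.prod_mul_distrib]
  simp only [freqSet, Fintype.mem_piFinset] at hω hω'
  have h3 : ∀ i : Fin m, (2*π)⁻¹ * ∫ x in Set.Icc (0:ℝ) (2*π), phi (ω i) x * phi (ω' i) x
      = if ω i = ω' i then (if ω i = 0 then 1 else 2⁻¹) else 0 :=
    fun i => Jval _ _ (hω i) (hω' i)
  rw [Finset.prod_congr rfl fun i _ => h3 i]
  by_cases h : ω = ω'
  · subst h
    rw [if_pos rfl]
    simp only [eq_self_iff_true, if_true]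
    rw [Finset.prod_ite (fun _ => (1:ℝ)) (fun _ => (2:ℝ)⁻¹), Finset.prod_const,
      Finset.prod_const, one_pow, one_mul, ← inv_pow, wt]
  · rw [if_neg h]
    obtain ⟨i, hi⟩ := Function.ne_iff.mp h
    exact Finset.prod_eq_zero (Finset.mem_univ i) (if_neg hi)

open Real in
lemma cubeMean_sum {m : ℕ} {ι : Type*} (T : Finset ι) (h : ι → (Fin m → ℝ) → ℝ)
    (hc : ∀ a ∈ T, Continuous (h a)) :
    cubeMean m (fun θ => ∑ a ∈ T, h a θ) = ∑ a ∈ T, cubeMean m (h a) := by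
  rw [cubeMean, MeasureTheory.integral_finset_sum T
    (fun a ha => (hc a ha).integrableOn_Icc), Finset.mul_sum]
  rfl

open Real in
lemma cubeMean_const_mul {m : ℕ} (c : ℝ) (h : (Fin m → ℝ) → ℝ) :
    cubeMean m (fun θ => c * h θ) = c * cubeMean m h := by
  rw [cubeMean, MeasureTheory.integral_const_mul, cubeMean]; ring

theorem stmt2 (m ℓ : ℕ) (d : (Fin m → ℤ) → ℝ) :
    (Delta m (fun θ => ∑ ω ∈ freqSet m, d ω * Phi ω θ)
        (fun θ => ∑ ω ∈ (freqSet m).filter (fun ω => wt ω ≤ ℓ), d ω * Phi ω θ)) ^ 2 =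
      ∑ ω ∈ (freqSet m).filter (fun ω => ℓ < wt ω), ((2 : ℝ) ^ wt ω)⁻¹ * d ω ^ 2 := by
  set S : Finset (Fin m → ℤ) := (freqSet m).filter (fun ω => ℓ < wt ω) with hS
  have hSsub : S ⊆ freqSet m := Finset.filter_subset _ _
  -- the difference equals the sum over S
  have hdiff : ∀ θ : Fin m → ℝ,
      (∑ ω ∈ freqSet m, d ω * Phi ω θ)
        - (∑ ω ∈ (freqSet m).filter (fun ω => wt ω ≤ ℓ), d ω * Phi ω θ)
      = ∑ ω ∈ S, d ω * Phi ω θ := by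
    intro θ
    have := Finset.sum_filter_add_sum_filter_not (freqSet m) (fun ω => wt ω ≤ ℓ)
      (fun ω => d ω * Phi ω θ)
    have hfe : (freqSet m).filter (fun ω => ¬ wt ω ≤ ℓ) = S := by
      rw [hS]; exact Finset.filter_congr fun ω _ => by rw [not_le]
    rw [hfe] at this
    linarith
  -- Delta squared equals the cube mean
  have hnn : 0 ≤ cubeMean m fun θ => ((∑ ω ∈ freqSet m, d ω * Phi ω θ)
      - ∑ ω ∈ (freqSet m).filter (fun ω => wt ω ≤ ℓ), d ω * Phi ω θ) ^ 2 := by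
    apply mul_nonneg (by positivity)
    exact MeasureTheory.integral_nonneg fun θ => sq_nonneg _
  rw [Delta, Real.sq_sqrt hnn]
  -- rewrite the square as a double sum
  have hsq : (fun θ : Fin m → ℝ => ((∑ ω ∈ freqSet m, d ω * Phi ω θ)
      - ∑ ω ∈ (freqSet m).filter (fun ω => wt ω ≤ ℓ), d ω * Phi ω θ) ^ 2)
      = fun θ => ∑ p ∈ S ×ˢ S, (d p.1 * d p.2) * (Phi p.1 θ * Phi p.2 θ) := by
    funext θ
    rw [hdiff θ, sq, Finset.sum_mul_sum, ← Finset.sum_product']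
    exact Finset.sum_congr rfl fun p _ => by ring
  rw [hsq, cubeMean_sum _ _ (fun p _ => by
    exact continuous_const.mul ((Phi_continuous p.1).mul (Phi_continuous p.2)))]
  have hterm : ∀ p ∈ S ×ˢ S,
      cubeMean m (fun θ => (d p.1 * d p.2) * (Phi p.1 θ * Phi p.2 θ))
        = (d p.1 * d p.2) * (if p.1 = p.2 then ((2:ℝ) ^ wt p.1)⁻¹ else 0) := by
    intro p hp
    rw [Finset.mem_product] at hp
    rw [cubeMean_const_mul, cubeMean_Phi_mul (hSsub hp.1) (hSsub hp.2)]
  rw [Finset.sum_congr rfl hterm, Finset.sum_product]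
  refine Finset.sum_congr rfl fun ω hω => ?_
  have : ∑ ω' ∈ S, d ω * d ω' * (if ω = ω' then ((2:ℝ) ^ wt ω)⁻¹ else 0)
      = ∑ ω' ∈ S, (if ω = ω' then d ω * d ω' * ((2:ℝ) ^ wt ω)⁻¹ else 0) := by
    refine Finset.sum_congr rfl fun ω' _ => ?_
    split_ifs <;> ring
  rw [this, Finset.sum_ite_eq S ω, if_pos hω, sq]
  ring
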